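/- Let H = (S, A) be the stability structure of a conjunctive Boolean network with strongly connected dependency graph D and loop number p*, where S is the set of periodic orbits identified with binary necklaces of length p*. Then for periodic orbits s_i, s_j, the edge s_i → s_j exists in A if and only if one of the following holds: (1) s_i ≻ s_j and σ(s_i) − σ(s_j) = 1; (2) s_i ≺ s_j, σ(s_j) − σ(s_i) = 1, and D is a rose; (3) s_i = s_j, s_i is not the all-ones necklace, and D is not a cycle digraph. -/

import Mathlib

/-- A walk of length `ℓ` from `a` to `b` in the digraph with edge relation `E`. -/
def IsWalk {V : Type*} (E : V → V → Prop) (w : ℕ → V) (ℓ : ℕ) (a b : V) : Prop :=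
  w 0 = a ∧ w ℓ = b ∧ ∀ i < ℓ, E (w i) (w (i + 1))

/-- A digraph is strongly connected if any vertex can reach any other by a walk. -/
def StronglyConnected {V : Type*} (E : V → V → Prop) : Prop :=
  ∀ a b : V, ∃ w ℓ, IsWalk E w ℓ a b

/-- A cycle of length `ℓ`: a closed walk with no repeated vertices other than start/end. -/
def IsCycle {V : Type*} (E : V → V → Prop) (w : ℕ → V) (ℓ : ℕ) : Prop :=
  0 < ℓ ∧ w ℓ = w 0 ∧ (∀ i < ℓ, E (w i) (w (i + 1))) ∧
    ∀ i j, i < ℓ → j < ℓ → w i = w j → i = j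

/-- `RelP E p a b` (written `a ∼ₚ b`): some walk from `a` to `b` has length divisible by `p`. -/
def RelP {V : Type*} (E : V → V → Prop) (p : ℕ) (a b : V) : Prop :=
  ∃ w ℓ, IsWalk E w ℓ a b ∧ p ∣ ℓ

/-- The conjunctive Boolean network with in-neighbor sets `N`: coordinate `i` updates
to the AND (product over `F₂`) of the variables indexed by `N i`. -/
noncomputable def cbn {n : ℕ} (N : Fin n → Finset (Fin n)) (x : Fin n → Bool) : Fin n → Bool :=
  fun i => (N i).inf x

/-- The dependency graph of the conjunctive Boolean network: edge `j → i` iff `j ∈ N i`. -/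
def depEdge {n : ℕ} (N : Fin n → Finset (Fin n)) (j i : Fin n) : Prop := j ∈ N i

/-- A digraph is a rose if all its cycles have the same length and all cycles share at
least one common vertex. -/
def IsRose {V : Type*} (E : V → V → Prop) : Prop :=
  (∀ w ℓ w' ℓ', IsCycle E w ℓ → IsCycle E w' ℓ' → ℓ = ℓ') ∧
    ∃ v : V, ∀ w ℓ, IsCycle E w ℓ → ∃ i < ℓ, w i = v

/-- A digraph is a cycle digraph if it consists of a single directed cycle passing
through all its vertices, containing all its edges. -/
def IsCycleDigraph {V : Type*} [Fintype V] (E : V → V → Prop) : Prop :=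
  ∃ w ℓ, IsCycle E w ℓ ∧ ℓ = Fintype.card V ∧ (∀ v : V, ∃ i < ℓ, w i = v) ∧
    ∀ a b : V, E a b → ∃ i < ℓ, w i = a ∧ w (i + 1) = b

namespace StabAux

/-- Generic walk existence. -/
def hasW {V : Type*} (E : V → V → Prop) (t : ℕ) (u v : V) : Prop :=
  ∃ w, IsWalk E w t u v

lemma hasW_zero {V : Type*} (E : V → V → Prop) (u : V) : hasW E 0 u u :=
  ⟨fun _ => u, rfl, rfl, fun i h => absurd h (Nat.not_lt_zero i)⟩

lemma hasW_edge {V : Type*} {E : V → V → Prop} {a b : V} (h : E a b) : hasW E 1 a b := by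
  refine ⟨fun s => if s = 0 then a else b, rfl, rfl, ?_⟩
  intro i hi
  interval_cases i
  simpa using h

lemma hasW_trans {V : Type*} {E : V → V → Prop} {a b : ℕ} {u v x : V}
    (h1 : hasW E a u v) (h2 : hasW E b v x) : hasW E (a + b) u x := by
  obtain ⟨w1, hw10, hw11, hw1e⟩ := h1
  obtain ⟨w2, hw20, hw21, hw2e⟩ := h2
  refine ⟨fun s => if s ≤ a then w1 s else w2 (s - a), by simp [hw10], ?_, ?_⟩
  · by_cases hb : b = 0
    · subst hb; simp only [Nat.add_zero, le_refl, if_pos]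
      rw [hw11, ← hw20, hw21]
    · have : ¬ (a + b ≤ a) := by omega
      simp only [this, if_neg, Nat.add_sub_cancel_left, hw21, if_false]
  · intro i hi
    by_cases h1i : i + 1 ≤ a
    · have : i ≤ a := by omega
      simp only [this, h1i, if_pos]
      exact hw1e i (by omega)
    · by_cases h0i : i ≤ a
      · -- i = a
        have hia : i = a := by omega
        subst hia
        simp only [le_refl, if_pos, h1i, if_neg, Nat.add_sub_cancel_left]
        rw [hw11, ← hw20]
        exact hw2e 0 (by omega)
      · simp only [h0i, h1i, if_neg]
        have : i - a + 1 = i + 1 - a := by omega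
        rw [← this]
        exact hw2e (i - a) (by omega)

/-- Walk sets: `Wset N t i` is the set of `j` having a walk of length `t` to `i`. -/
def Wset {n : ℕ} (N : Fin n → Finset (Fin n)) : ℕ → Fin n → Finset (Fin n)
  | 0, i => {i}
  | t+1, i => (N i).biUnion (Wset N t)

lemma iter_eq {n : ℕ} (N : Fin n → Finset (Fin n)) (t : ℕ) (z : Fin n → Bool) (i : Fin n) :
    (cbn N)^[t] z i = (Wset N t i).inf z := by
  induction t generalizing z i with
  | zero => simp [Wset]
  | succ t ih =>
    rw [Function.iterate_succ_apply']
    show (N i).inf ((cbn N)^[t] z) = _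
    rw [Wset, Finset.inf_biUnion]
    exact Finset.inf_congr rfl (fun j _ => ih z j)

lemma mem_Wset {n : ℕ} {N : Fin n → Finset (Fin n)} {t : ℕ} {u v : Fin n} :
    u ∈ Wset N t v ↔ hasW (depEdge N) t u v := by
  induction t generalizing v with
  | zero =>
    simp only [Wset, Finset.mem_singleton]
    constructor
    · rintro rfl; exact hasW_zero _ _
    · rintro ⟨w, h0, h1, _⟩; rw [← h0, h1]
  | succ t ih =>
    simp only [Wset, Finset.mem_biUnion]
    constructor
    · rintro ⟨k, hk, hu⟩
      exact hasW_trans (ih.mp hu) (hasW_edge (show depEdge N k v from hk))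
    · rintro ⟨w, h0, h1, he⟩
      refine ⟨w t, ?_, ih.mpr ⟨w, h0, rfl, fun i hi => he i (by omega)⟩⟩
      have := he t (by omega)
      rw [h1] at this
      exact this

lemma Wset_nonempty {n : ℕ} {N : Fin n → Finset (Fin n)} (hne : ∀ i, (N i).Nonempty)
    (t : ℕ) (v : Fin n) : (Wset N t v).Nonempty := by
  induction t generalizing v with
  | zero => exact ⟨v, by simp [Wset]⟩
  | succ t ih =>
    obtain ⟨k, hk⟩ := hne v
    obtain ⟨u, hu⟩ := ih k
    exact ⟨u, by simp only [Wset, Finset.mem_biUnion]; exact ⟨k, hk, hu⟩⟩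

section
variable {V : Type*} {E : V → V → Prop}

/-- Splicing out a closed subwalk. -/
lemma splice {w : ℕ → V} {ℓ i j : ℕ} {a b : V} (hij : i < j) (hjl : j < ℓ)
    (heq : w i = w j) (hw : IsWalk E w ℓ a b) :
    IsWalk E (fun s => if s ≤ i then w s else w (s + (j - i))) (ℓ - (j - i)) a b := by
  obtain ⟨h0, h1, he⟩ := hw
  refine ⟨by simpa using h0, ?_, ?_⟩
  · have hgt : ¬ (ℓ - (j - i) ≤ i) := by omega
    have h2 : ℓ - (j - i) + (j - i) = ℓ := by omega
    show (if ℓ - (j - i) ≤ i then w (ℓ - (j - i)) else w (ℓ - (j - i) + (j - i))) = b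
    rw [if_neg hgt, h2, h1]
  · intro s hs
    by_cases hs1 : s + 1 ≤ i
    · simp only [hs1, show s ≤ i by omega, if_pos]
      exact he s (by omega)
    · by_cases hs0 : s ≤ i
      · have : s = i := by omega
        subst this
        simp only [le_refl, if_pos, hs1, if_neg, heq]
        have : s + 1 + (j - s) = j + 1 := by omega
        rw [this]
        exact he j (by omega)
      · simp only [hs0, hs1, if_neg]
        have : s + 1 + (j - i) = s + (j - i) + 1 := by omega
        rw [this]
        exact he (s + (j - i)) (by omega)

/-- Every closed walk length is divisible by `p`, given that all cycle lengths are. -/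
lemma closed_dvd {p : ℕ} (hdiv : ∀ w ℓ, IsCycle E w ℓ → p ∣ ℓ) :
    ∀ ℓ (w : ℕ → V) (u : V), IsWalk E w ℓ u u → p ∣ ℓ := by
  intro ℓ
  induction ℓ using Nat.strong_induction_on with
  | _ ℓ IH =>
    intro w u hw
    rcases Nat.eq_zero_or_pos ℓ with h0 | hpos
    · simp [h0]
    by_cases hinj : ∀ s t, s < ℓ → t < ℓ → w s = w t → s = t
    · exact hdiv w ℓ ⟨hpos, hw.2.1.trans hw.1.symm, hw.2.2, hinj⟩
    · push_neg at hinj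
      obtain ⟨s, t, hs, ht, heq, hne⟩ := hinj
      -- wlog s < t
      rcases Nat.lt_or_ge s t with hlt | hge
      · -- inner cycle w on [s,t]
        have hseg : IsWalk E (fun q => w (s + q)) (t - s) (w s) (w s) := by
          refine ⟨by simp, ?_, ?_⟩
          · show w (s + (t - s)) = w s
            have : s + (t - s) = t := by omega
            rw [this, heq]
          · intro q hq
            show E (w (s + q)) (w (s + (q + 1)))
            have : s + (q + 1) = s + q + 1 := by omega
            rw [this]
            exact hw.2.2 (s + q) (by omega)
        have h1 : p ∣ t - s := IH (t - s) (by omega) _ _ hseg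
        have h2 : p ∣ ℓ - (t - s) :=
          IH (ℓ - (t - s)) (by omega) _ _ (splice hlt ht heq hw)
        have : ℓ = (t - s) + (ℓ - (t - s)) := by omega
        rw [this]
        exact Nat.dvd_add h1 h2
      · have hlt : t < s := by omega
        have hseg : IsWalk E (fun q => w (t + q)) (s - t) (w t) (w t) := by
          refine ⟨by simp, ?_, ?_⟩
          · show w (t + (s - t)) = w t
            have : t + (s - t) = s := by omega
            rw [this, heq.symm]
          · intro q hq
            show E (w (t + q)) (w (t + (q + 1)))
            have : t + (q + 1) = t + q + 1 := by omega
            rw [this]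
            exact hw.2.2 (t + q) (by omega)
        have h1 : p ∣ s - t := IH (s - t) (by omega) _ _ hseg
        have h2 : p ∣ ℓ - (s - t) :=
          IH (ℓ - (s - t)) (by omega) _ _ (splice hlt hs heq.symm hw)
        have : ℓ = (s - t) + (ℓ - (s - t)) := by omega
        rw [this]
        exact Nat.dvd_add h1 h2

/-- From a positive closed walk through `u`, extract a cycle through `u`. -/
lemma cycle_through :
    ∀ ℓ (w : ℕ → V) (u : V), 0 < ℓ → IsWalk E w ℓ u u →
      ∃ w' ℓ', IsCycle E w' ℓ' ∧ ∃ s < ℓ', w' s = u := by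
  intro ℓ
  induction ℓ using Nat.strong_induction_on with
  | _ ℓ IH =>
    intro w u hpos hw
    by_cases hinj : ∀ s t, s < ℓ → t < ℓ → w s = w t → s = t
    · exact ⟨w, ℓ, ⟨hpos, hw.2.1.trans hw.1.symm, hw.2.2, hinj⟩, 0, hpos, hw.1⟩
    · push_neg at hinj
      obtain ⟨s, t, hs, ht, heq, hne⟩ := hinj
      rcases Nat.lt_or_ge s t with hlt | hge
      · exact IH (ℓ - (t - s)) (by omega) _ u (by omega) (splice hlt ht heq hw)
      · have hlt : t < s := by omega
        exact IH (ℓ - (s - t)) (by omega) _ u (by omega) (splice hlt hs heq.symm hw)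

end

section Res
variable {n : ℕ} {N : Fin n → Finset (Fin n)}

/-- A chosen walk length from `u` to `v`. -/
noncomputable def dN (hsc : StronglyConnected (depEdge N)) (u v : Fin n) : ℕ :=
  (hsc u v).choose_spec.choose

lemma hasW_dN (hsc : StronglyConnected (depEdge N)) (u v : Fin n) :
    hasW (depEdge N) (dN hsc u v) u v :=
  ⟨(hsc u v).choose, (hsc u v).choose_spec.choose_spec⟩

/-- Residue of the distance, in `ZMod p`. -/
noncomputable def rbN (hsc : StronglyConnected (depEdge N)) (p : ℕ) (u v : Fin n) : ZMod p :=
  (dN hsc u v : ZMod p)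

variable {p : ℕ}

lemma closed_p (hdiv : ∀ w ℓ, IsCycle (depEdge N) w ℓ → p ∣ ℓ) {t : ℕ} {u : Fin n} (h : hasW (depEdge N) t u u) : p ∣ t := by
  obtain ⟨w, hw⟩ := h
  exact closed_dvd hdiv t w u hw

lemma cast_eq_rb (hsc : StronglyConnected (depEdge N)) (hdiv : ∀ w ℓ, IsCycle (depEdge N) w ℓ → p ∣ ℓ) {t : ℕ} {u v : Fin n} (h : hasW (depEdge N) t u v) :
    (t : ZMod p) = rbN hsc p u v := by
  have h1 : p ∣ t + dN hsc v u := closed_p hdiv (hasW_trans h (hasW_dN hsc v u))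
  have h2 : p ∣ dN hsc u v + dN hsc v u :=
    closed_p hdiv (hasW_trans (hasW_dN hsc u v) (hasW_dN hsc v u))
  have e1 : ((t + dN hsc v u : ℕ) : ZMod p) = 0 := (ZMod.natCast_eq_zero_iff _ _).mpr h1
  have e2 : ((dN hsc u v + dN hsc v u : ℕ) : ZMod p) = 0 :=
    (ZMod.natCast_eq_zero_iff _ _).mpr h2
  push_cast at e1 e2
  unfold rbN
  linear_combination e1 - e2

lemma rb_self (hsc : StronglyConnected (depEdge N)) (hdiv : ∀ w ℓ, IsCycle (depEdge N) w ℓ → p ∣ ℓ) (u : Fin n) : rbN hsc p u u = 0 := by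
  have h := cast_eq_rb hsc hdiv (hasW_zero (depEdge N) u)
  simpa using h.symm

lemma rb_add (hsc : StronglyConnected (depEdge N)) (hdiv : ∀ w ℓ, IsCycle (depEdge N) w ℓ → p ∣ ℓ) (u v x : Fin n) : rbN hsc p u v + rbN hsc p v x = rbN hsc p u x := by
  have h := cast_eq_rb hsc hdiv (hasW_trans (hasW_dN hsc u v) (hasW_dN hsc v x))
  push_cast at h
  exact h

lemma rb_symm (hsc : StronglyConnected (depEdge N)) (hdiv : ∀ w ℓ, IsCycle (depEdge N) w ℓ → p ∣ ℓ) (u v : Fin n) : rbN hsc p v u = - rbN hsc p u v := by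
  have h := rb_add hsc hdiv u v u
  rw [rb_self hsc hdiv] at h
  linear_combination h

lemma edge_rb (hsc : StronglyConnected (depEdge N)) (hdiv : ∀ w ℓ, IsCycle (depEdge N) w ℓ → p ∣ ℓ) {a b : Fin n} (h : depEdge N a b) : rbN hsc p a b = 1 := by
  have h2 := cast_eq_rb hsc hdiv (hasW_edge h)
  rw [← h2]
  push_cast
  ring

lemma relP_iff (hsc : StronglyConnected (depEdge N)) (hdiv : ∀ w ℓ, IsCycle (depEdge N) w ℓ → p ∣ ℓ) {u v : Fin n} : RelP (depEdge N) p u v ↔ rbN hsc p u v = 0 := by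
  constructor
  · rintro ⟨w, ℓ, hw, hd⟩
    rw [← cast_eq_rb hsc hdiv ⟨w, hw⟩]
    exact (ZMod.natCast_eq_zero_iff _ _).mpr hd
  · intro h
    obtain ⟨w, hw⟩ := hasW_dN hsc u v
    refine ⟨w, dN hsc u v, hw, ?_⟩
    have : (dN hsc u v : ZMod p) = 0 := h
    exact (ZMod.natCast_eq_zero_iff _ _).mp this

lemma closed_pos (hsc : StronglyConnected (depEdge N)) (hne : ∀ i, (N i).Nonempty) (v : Fin n) :
    ∃ c, 0 < c ∧ hasW (depEdge N) c v v := by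
  obtain ⟨j, hj⟩ := hne v
  exact ⟨dN hsc v j + 1, by omega, hasW_trans (hasW_dN hsc v j) (hasW_edge hj)⟩

/-- All large multiples of `p` occur as closed-walk lengths at `v`. -/
lemma satK (hsc : StronglyConnected (depEdge N)) (hdiv : ∀ w ℓ, IsCycle (depEdge N) w ℓ → p ∣ ℓ) (hgcd : ∀ q, (∀ w ℓ, IsCycle (depEdge N) w ℓ → q ∣ ℓ) → q ∣ p)
    (v : Fin n) : ∃ K, ∀ k, K ≤ k → hasW (depEdge N) (k * p) v v := by
  classical
  set C : Set ℕ := {c | hasW (depEdge N) c v v} with hC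
  have hC0 : (0 : ℕ) ∈ C := hasW_zero _ v
  have hCadd : ∀ a b, a ∈ C → b ∈ C → a + b ∈ C := fun a b ha hb => hasW_trans ha hb
  have hCsmul : ∀ k c, c ∈ C → k * c ∈ C := by
    intro k c hc
    induction k with
    | zero => simpa using hC0
    | succ k ih => rw [Nat.succ_mul]; exact hCadd _ _ ih hc
  set G : AddSubgroup ℤ := AddSubgroup.closure ((fun c : ℕ => (c : ℤ)) '' C) with hG
  have hcycG : ∀ w ℓ, IsCycle (depEdge N) w ℓ → (ℓ : ℤ) ∈ G := by
    intro w ℓ hcyc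
    have hwalk : hasW (depEdge N) ℓ (w 0) (w 0) := ⟨w, rfl, hcyc.2.1, hcyc.2.2.1⟩
    have c1 : dN hsc v (w 0) + dN hsc (w 0) v ∈ C :=
      hasW_trans (hasW_dN hsc v (w 0)) (hasW_dN hsc (w 0) v)
    have c2 : dN hsc v (w 0) + ℓ + dN hsc (w 0) v ∈ C :=
      hasW_trans (hasW_trans (hasW_dN hsc v (w 0)) hwalk) (hasW_dN hsc (w 0) v)
    have m1 : ((dN hsc v (w 0) + dN hsc (w 0) v : ℕ) : ℤ) ∈ G :=
      AddSubgroup.subset_closure ⟨_, c1, rfl⟩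
    have m2 : ((dN hsc v (w 0) + ℓ + dN hsc (w 0) v : ℕ) : ℤ) ∈ G :=
      AddSubgroup.subset_closure ⟨_, c2, rfl⟩
    have heq : (ℓ : ℤ) = ((dN hsc v (w 0) + ℓ + dN hsc (w 0) v : ℕ) : ℤ)
        - ((dN hsc v (w 0) + dN hsc (w 0) v : ℕ) : ℤ) := by push_cast; ring
    rw [heq]
    exact sub_mem m2 m1
  obtain ⟨g, hg⟩ := Int.subgroup_cyclic G
  have hgp : g.natAbs ∣ p := by
    apply hgcd
    intro w ℓ hcyc
    have hmem : (ℓ : ℤ) ∈ AddSubgroup.closure {g} := hg ▸ hcycG w ℓ hcyc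
    obtain ⟨m, hm⟩ := AddSubgroup.mem_closure_singleton.mp hmem
    have hdv : g ∣ (ℓ : ℤ) := ⟨m, by rw [← hm, smul_eq_mul]; ring⟩
    have := Int.natAbs_dvd_natAbs.mpr hdv
    simpa using this
  have hpg : (p : ℤ) ∣ g := by
    have hgG : g ∈ G := by
      rw [hg]; exact AddSubgroup.mem_closure_singleton.mpr ⟨1, one_smul _ _⟩
    refine AddSubgroup.closure_induction
      (p := fun z _ => (p : ℤ) ∣ z) ?_ ?_ ?_ ?_ hgG
    · rintro z ⟨c, hc, rfl⟩
      exact Int.ofNat_dvd.mpr (closed_p hdiv hc)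
    · exact dvd_zero _
    · intro a b _ _ ha hb; exact dvd_add ha hb
    · intro a _ ha; exact dvd_neg.mpr ha
  have hpabs : p ∣ g.natAbs := by
    have := Int.natAbs_dvd_natAbs.mpr hpg
    simpa using this
  have hgabs : g.natAbs = p := Nat.dvd_antisymm hgp hpabs
  have hpG : (p : ℤ) ∈ G := by
    have hself : g ∈ G := by
      rw [hg]; exact AddSubgroup.mem_closure_singleton.mpr ⟨1, one_smul _ _⟩
    rcases Int.natAbs_eq g with h | h
    · have hh : (p : ℤ) = g := by omega
      rw [hh]; exact hself
    · have hh : (p : ℤ) = -g := by omega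
      rw [hh]; exact neg_mem hself
  have hXY : ∃ X ∈ C, ∃ Y ∈ C, (p : ℤ) = (X : ℤ) - (Y : ℤ) := by
    refine AddSubgroup.closure_induction
      (p := fun z _ => ∃ X ∈ C, ∃ Y ∈ C, z = (X : ℤ) - (Y : ℤ)) ?_ ?_ ?_ ?_ hpG
    · rintro z ⟨c, hc, rfl⟩
      exact ⟨c, hc, 0, hC0, by push_cast; ring⟩
    · exact ⟨0, hC0, 0, hC0, by simp⟩
    · rintro a b _ _ ⟨X1, h1, Y1, h2, rfl⟩ ⟨X2, h3, Y2, h4, rfl⟩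
      exact ⟨X1 + X2, hCadd _ _ h1 h3, Y1 + Y2, hCadd _ _ h2 h4, by push_cast; ring⟩
    · rintro a _ ⟨X1, h1, Y1, h2, rfl⟩
      exact ⟨Y1, h2, X1, h1, by push_cast; ring⟩
  obtain ⟨X, hX, Y, hY, hXYeq⟩ := hXY
  have hXeq : X = Y + p := by omega
  obtain ⟨y, hy⟩ : p ∣ Y := closed_p hdiv hY
  rcases Nat.eq_zero_or_pos y with hy0 | hypos
  · refine ⟨0, fun k _ => ?_⟩
    have hXp : X = p := by subst hy0; simp at hy; omega
    have hkX := hCsmul k X hX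
    rw [hXp] at hkX
    exact hkX
  · refine ⟨y * y, fun k hk => ?_⟩
    set a := k % y with ha
    have hay : a < y := Nat.mod_lt _ hypos
    have hyA : y ≤ k / y := (Nat.le_div_iff_mul_le hypos).mpr hk
    have h2 : y * (k / y) + a = k := Nat.div_add_mod k y
    obtain ⟨b, hb⟩ : ∃ b, k / y = a + b := ⟨k / y - a, by omega⟩
    have hk2 : k = y * (a + b) + a := by rw [← hb]; omega
    have key : a * X + b * Y = k * p := by
      rw [hXeq, hy, hk2]
      ring
    have hmem := hCadd _ _ (hCsmul a X hX) (hCsmul b Y hY)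
    rwa [key] at hmem

end Res

section Sat
variable {n : ℕ} {N : Fin n → Finset (Fin n)} {p : ℕ}

lemma satT (hsc : StronglyConnected (depEdge N))
    (hdiv : ∀ w ℓ, IsCycle (depEdge N) w ℓ → p ∣ ℓ)
    (hgcd : ∀ q, (∀ w ℓ, IsCycle (depEdge N) w ℓ → q ∣ ℓ) → q ∣ p) (hp : 0 < p) :
    ∃ T, ∀ t, T ≤ t → ∀ u v : Fin n,
      (hasW (depEdge N) t u v ↔ (t : ZMod p) = rbN hsc p u v) := by
  classical
  choose K hK using satK hsc hdiv hgcd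
  refine ⟨Finset.univ.sup (fun q : Fin n × Fin n => dN hsc q.1 q.2 + K q.1 * p + p), ?_⟩
  intro t ht u v
  constructor
  · exact fun h => cast_eq_rb hsc hdiv h
  · intro h
    have hle : dN hsc u v + K u * p + p ≤ t :=
      le_trans (Finset.le_sup (f := fun q : Fin n × Fin n => dN hsc q.1 q.2 + K q.1 * p + p)
        (Finset.mem_univ (u, v))) ht
    have hdvd : p ∣ t - dN hsc u v := by
      have hc : ((t - dN hsc u v : ℕ) : ZMod p) = 0 := by
        rw [Nat.cast_sub (by omega), h]
        unfold rbN
        ring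
      exact (ZMod.natCast_eq_zero_iff _ _).mp hc
    obtain ⟨j, hj⟩ := hdvd
    have he : (K u + 1) * p = K u * p + p := by ring
    have he2 : j * p = p * j := by ring
    have hjK : K u ≤ j := by
      have h1 : (K u + 1) * p ≤ j * p := by omega
      have := Nat.le_of_mul_le_mul_right h1 hp
      omega
    have hw1 : hasW (depEdge N) (j * p) u u := hK u j hjK
    have hw2 := hasW_trans hw1 (hasW_dN hsc u v)
    have heq : j * p + dN hsc u v = t := by omega
    rwa [heq] at hw2

/-- The residue class of `v` with offset `ρ`: all `j` with walk-residue `ρ` to `v`. -/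
noncomputable def Aset (hsc : StronglyConnected (depEdge N)) (p : ℕ) (v : Fin n) (ρ : ZMod p) :
    Finset (Fin n) := by
  classical
  exact Finset.univ.filter (fun j => rbN hsc p j v = ρ)

lemma mem_Aset {hsc : StronglyConnected (depEdge N)} {v u : Fin n} {ρ : ZMod p} :
    u ∈ Aset hsc p v ρ ↔ rbN hsc p u v = ρ := by
  simp [Aset]

lemma iter_eq_Aset (hsc : StronglyConnected (depEdge N)) {T : ℕ}
    (hT : ∀ t, T ≤ t → ∀ u v : Fin n,
      (hasW (depEdge N) t u v ↔ (t : ZMod p) = rbN hsc p u v))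
    {t : ℕ} (ht : T ≤ t) (z : Fin n → Bool) (i : Fin n) :
    (cbn N)^[t] z i = (Aset hsc p i ((t : ℕ) : ZMod p)).inf z := by
  rw [iter_eq]
  congr 1
  ext u
  rw [mem_Wset, mem_Aset, eq_comm]
  exact hT t ht u i

lemma exists_rb_eq (hsc : StronglyConnected (depEdge N))
    (hdiv : ∀ w ℓ, IsCycle (depEdge N) w ℓ → p ∣ ℓ) (hp : 0 < p)
    (hne : ∀ i, (N i).Nonempty) (v : Fin n) (ρ : ZMod p) :
    ∃ u, rbN hsc p u v = ρ := by
  haveI : NeZero p := ⟨hp.ne'⟩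
  obtain ⟨u, hu⟩ := Wset_nonempty hne (ZMod.val ρ) v
  have h := cast_eq_rb hsc hdiv (mem_Wset.mp hu)
  rw [ZMod.natCast_rightInverse ρ] at h
  exact ⟨u, h.symm⟩

lemma Aset_eq (hsc : StronglyConnected (depEdge N))
    (hdiv : ∀ w ℓ, IsCycle (depEdge N) w ℓ → p ∣ ℓ)
    {i i0 : Fin n} {ε : ZMod p} (h : rbN hsc p i0 i = ε) :
    Aset hsc p i ε = Aset hsc p i0 0 := by
  ext u
  rw [mem_Aset, mem_Aset, ← rb_add hsc hdiv u i0 i, h]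
  exact add_eq_right

lemma iter_fix_of_dvd {α : Type*} {f : α → α} {z : α} {m t : ℕ}
    (hf : f^[m] z = z) (h : m ∣ t) : f^[t] z = z := by
  obtain ⟨c, rfl⟩ := h
  rw [Function.iterate_mul]
  exact Function.iterate_fixed hf c

lemma periodic_rb_const (hsc : StronglyConnected (depEdge N))
    (hdiv : ∀ w ℓ, IsCycle (depEdge N) w ℓ → p ∣ ℓ) (hp : 0 < p) {T : ℕ}
    (hT : ∀ t, T ≤ t → ∀ u v : Fin n,
      (hasW (depEdge N) t u v ↔ (t : ZMod p) = rbN hsc p u v))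
    {z : Fin n → Bool} {m : ℕ} (hm : 0 < m) (hz : (cbn N)^[m] z = z)
    {i i' : Fin n} (h : rbN hsc p i i' = 0) : z i = z i' := by
  set t := m * (p * (T + 1)) with htdef
  have htT : T ≤ t :=
    calc T ≤ T + 1 := by omega
    _ ≤ p * (T + 1) := Nat.le_mul_of_pos_left _ hp
    _ ≤ m * (p * (T + 1)) := Nat.le_mul_of_pos_left _ hm
  have hmt : m ∣ t := Dvd.intro _ rfl
  have hpt : p ∣ t := ⟨m * (T + 1), by ring⟩
  have hcast : ((t : ℕ) : ZMod p) = 0 := (ZMod.natCast_eq_zero_iff _ _).mpr hpt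
  have hfix := iter_fix_of_dvd hz hmt
  have e1 : z i = (Aset hsc p i (0 : ZMod p)).inf z := by
    conv_lhs => rw [← hfix]
    rw [iter_eq_Aset hsc hT htT, hcast]
  have e2 : z i' = (Aset hsc p i' (0 : ZMod p)).inf z := by
    conv_lhs => rw [← hfix]
    rw [iter_eq_Aset hsc hT htT, hcast]
  rw [e1, e2, Aset_eq hsc hdiv (show rbN hsc p i i' = 0 from h)]

lemma inf_eq_false_of {α : Type*} {s : Finset α} {f : α → Bool} {a : α}
    (ha : a ∈ s) (hfa : f a = false) : s.inf f = false :=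
  le_bot_iff.mp (le_trans (Finset.inf_le ha) (le_of_eq hfa))

lemma inf_update_false {α : Type*} [DecidableEq α] (s : Finset α) (z : α → Bool) (i0 : α) :
    s.inf (Function.update z i0 false) = if i0 ∈ s then false else s.inf z := by
  by_cases h : i0 ∈ s
  · rw [if_pos h]
    exact inf_eq_false_of h (Function.update_self i0 false z)
  · rw [if_neg h]
    exact Finset.inf_congr rfl fun j hj =>
      Function.update_of_ne (ne_of_mem_of_not_mem hj h) _ _

lemma inf_update_true {α : Type*} [DecidableEq α] (s : Finset α) (z : α → Bool) (i0 : α) :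
    s.inf (Function.update z i0 true) = (s.erase i0).inf z := by
  by_cases h : i0 ∈ s
  · conv_lhs => rw [← Finset.insert_erase h]
    rw [Finset.inf_insert, Function.update_self]
    have : (true : Bool) = ⊤ := rfl
    rw [this, top_inf_eq]
    exact Finset.inf_congr rfl fun j hj =>
      Function.update_of_ne (Finset.ne_of_mem_erase hj) _ _
  · rw [Finset.erase_eq_of_notMem h]
    exact Finset.inf_congr rfl fun j hj =>
      Function.update_of_ne (ne_of_mem_of_not_mem hj h) _ _

end Sat

section Rose
variable {n : ℕ} {N : Fin n → Finset (Fin n)} {p : ℕ}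

lemma cycle_edge_mod {V : Type*} {E : V → V → Prop} {w : ℕ → V} {ℓ : ℕ}
    (hc : IsCycle E w ℓ) (q : ℕ) : E (w (q % ℓ)) (w ((q + 1) % ℓ)) := by
  obtain ⟨hpos, hcl, hce, _⟩ := hc
  have hr : q % ℓ < ℓ := Nat.mod_lt _ hpos
  have h1 : (q + 1) % ℓ = (q % ℓ + 1) % ℓ := by rw [Nat.mod_add_mod]
  rw [h1]
  by_cases h : q % ℓ + 1 = ℓ
  · rw [h, Nat.mod_self]
    have h2 := hce (q % ℓ) hr
    rwa [h, hcl] at h2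
  · rw [Nat.mod_eq_of_lt (show q % ℓ + 1 < ℓ by omega)]
    exact hce (q % ℓ) hr

lemma rose_of_singleton (hsc : StronglyConnected (depEdge N))
    (hdiv : ∀ w ℓ, IsCycle (depEdge N) w ℓ → p ∣ ℓ) (hp : 0 < p) {v : Fin n}
    (hv : ∀ u, rbN hsc p u v = 0 → u = v) : IsRose (depEdge N) := by
  haveI : NeZero p := ⟨hp.ne'⟩
  have key : ∀ w ℓ, IsCycle (depEdge N) w ℓ → ℓ = p ∧ ∃ s < ℓ, w s = v := by
    intro w ℓ hc
    obtain ⟨hpos, hcl, hce, hinj⟩ := hc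
    have hstep : ∀ s, s < ℓ → rbN hsc p (w s) v = rbN hsc p (w (s + 1)) v + 1 := by
      intro s hs
      have h1 : rbN hsc p (w s) (w (s + 1)) = 1 := edge_rb hsc hdiv (hce s hs)
      have h2 := rb_add hsc hdiv (w s) (w (s + 1)) v
      rw [h1] at h2
      linear_combination h2.symm
    have hiter : ∀ s, s ≤ ℓ → rbN hsc p (w s) v = rbN hsc p (w 0) v - (s : ZMod p) := by
      intro s hs
      induction s with
      | zero => simp
      | succ s ih =>
        have hs' : s < ℓ := by omega
        have := hstep s hs'
        have ihh := ih (by omega)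
        push_cast
        linear_combination ihh - this
    have hdl : p ∣ ℓ := hdiv w ℓ ⟨hpos, hcl, hce, hinj⟩
    have hlp : p ≤ ℓ := Nat.le_of_dvd hpos hdl
    set ρ := rbN hsc p (w 0) v with hρ
    have hsp : ρ.val < p := ZMod.val_lt ρ
    have hs0 : rbN hsc p (w ρ.val) v = 0 := by
      rw [hiter ρ.val (by omega), ZMod.natCast_rightInverse ρ]
      ring
    have hwv : w ρ.val = v := hv _ hs0
    have hlep : ℓ = p := by
      by_contra hne'
      obtain ⟨c, hcc⟩ := hdl
      have hc2 : 2 ≤ c := by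
        rcases c with _ | _ | c
        · omega
        · exfalso; apply hne'; omega
        · omega
      have h2p : 2 * p ≤ ℓ := by
        have := Nat.mul_le_mul_left p hc2
        omega
      have hs2 : rbN hsc p (w (ρ.val + p)) v = 0 := by
        rw [hiter _ (by omega)]
        push_cast
        rw [ZMod.natCast_self, ZMod.natCast_rightInverse ρ]
        ring
      have hwv2 : w (ρ.val + p) = v := hv _ hs2
      have := hinj ρ.val (ρ.val + p) (by omega) (by omega) (by rw [hwv, hwv2])
      omega
    exact ⟨hlep, ρ.val, by omega, hwv⟩
  constructor
  · intro w ℓ w' ℓ' h h'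
    rw [(key _ _ h).1, (key _ _ h').1]
  · exact ⟨v, fun w ℓ h => (key w ℓ h).2⟩

lemma singleton_of_rose (hsc : StronglyConnected (depEdge N))
    (hdiv : ∀ w ℓ, IsCycle (depEdge N) w ℓ → p ∣ ℓ)
    (hgcd : ∀ q, (∀ w ℓ, IsCycle (depEdge N) w ℓ → q ∣ ℓ) → q ∣ p)
    (hp : 0 < p) (hne : ∀ i, (N i).Nonempty) (hrose : IsRose (depEdge N)) :
    ∃ v : Fin n, ∀ u, rbN hsc p u v = 0 → u = v := by
  obtain ⟨hlen, v, hv⟩ := hrose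
  refine ⟨v, fun u hu => ?_⟩
  by_contra hne'
  obtain ⟨c, hcpos, ⟨wc, hwc⟩⟩ := closed_pos hsc hne u
  obtain ⟨w', ℓ', hc', s, hs, hws⟩ := cycle_through c wc u hcpos hwc
  have hℓp : ℓ' = p := by
    have h1 : p ∣ ℓ' := hdiv _ _ hc'
    have h2 : ℓ' ∣ p := hgcd ℓ' (fun w'' ℓ'' hc'' => (hlen w'' ℓ'' w' ℓ' hc'' hc').symm ▸ dvd_refl _)
    exact Nat.dvd_antisymm h2 h1
  obtain ⟨t, ht, hwt⟩ := hv w' ℓ' hc'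
  have hst : s ≠ t := fun h => hne' (by rw [← hws, h, hwt])
  set δ := if s < t then t - s else t + ℓ' - s with hδ
  have hδpos : 0 < δ := by
    rw [hδ]; split <;> omega
  have hδlt : δ < ℓ' := by
    rw [hδ]; split <;> omega
  have hwalk : hasW (depEdge N) δ u v := by
    refine ⟨fun q => w' ((s + q) % ℓ'), ?_, ?_, ?_⟩
    · simp only [Nat.add_zero]
      rw [Nat.mod_eq_of_lt hs, hws]
    · have : (s + δ) % ℓ' = t := by
        rw [hδ]
        split
        · rw [Nat.mod_eq_of_lt (by omega), show s + (t - s) = t by omega]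
        · rw [show s + (t + ℓ' - s) = ℓ' + t by omega, Nat.add_mod_left,
            Nat.mod_eq_of_lt ht]
      show w' ((s + δ) % ℓ') = v
      rw [this, hwt]
    · intro q hq
      have := cycle_edge_mod hc' (s + q)
      rwa [show s + q + 1 = s + (q + 1) by omega] at this
  have hcast := cast_eq_rb hsc hdiv hwalk
  rw [hu] at hcast
  have hdvd : p ∣ δ := (ZMod.natCast_eq_zero_iff _ _).mp hcast
  have := Nat.le_of_dvd hδpos hdvd
  omega

lemma cd_singleton (hdiv : ∀ w ℓ, IsCycle (depEdge N) w ℓ → p ∣ ℓ)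
    (hgcd : ∀ q, (∀ w ℓ, IsCycle (depEdge N) w ℓ → q ∣ ℓ) → q ∣ p)
    (hcd : IsCycleDigraph (depEdge N)) :
    ∀ u u' : Fin n, RelP (depEdge N) p u u' → u = u' := by
  obtain ⟨w, ℓ, hc, hcard, hcover, hedge⟩ := hcd
  have hpos : 0 < ℓ := hc.1
  have hinj := hc.2.2.2
  have hA : ∀ a b, depEdge N a b → ∀ i, i < ℓ → w i = a → w ((i + 1) % ℓ) = b := by
    intro a b hab i hi hwi
    obtain ⟨i0, hi0, hwi0, hwi01⟩ := hedge a b hab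
    have : i0 = i := hinj i0 i hi0 hi (by rw [hwi0, hwi])
    subst this
    by_cases h : i0 + 1 = ℓ
    · rw [h, Nat.mod_self, ← hc.2.1, ← h, hwi01]
    · rw [Nat.mod_eq_of_lt (by omega), hwi01]
  have hdet : ∀ t (u v' : Fin n), hasW (depEdge N) t u v' →
      ∀ i, i < ℓ → w i = u → v' = w ((i + t) % ℓ) := by
    intro t
    induction t with
    | zero =>
      rintro u v' ⟨w', h0, h1, _⟩ i hi hwi
      rw [Nat.add_zero, Nat.mod_eq_of_lt hi, hwi, ← h0, h1]
    | succ t ih =>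
      rintro u v' ⟨w', h0, h1, he⟩ i hi hwi
      have hfirst : depEdge N u (w' 1) := by
        have := he 0 (by omega)
        rwa [h0] at this
      have htail : hasW (depEdge N) t (w' 1) v' :=
        ⟨fun s => w' (s + 1), rfl, by rwa [show t + 1 = t + 1 from rfl] at h1,
          fun s hs => he (s + 1) (by omega)⟩
      have hw1 : w ((i + 1) % ℓ) = w' 1 := hA u (w' 1) hfirst i hi hwi
      have := ih (w' 1) v' htail ((i + 1) % ℓ) (Nat.mod_lt _ hpos) hw1
      rwa [Nat.mod_add_mod, show i + 1 + t = i + (t + 1) by omega] at this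
  have hclosed : ∀ t (u : Fin n), hasW (depEdge N) t u u → ℓ ∣ t := by
    intro t u hw
    obtain ⟨i, hi, hwi⟩ := hcover u
    have := hdet t u u hw i hi hwi
    have heq : (i + t) % ℓ = i :=
      hinj _ _ (Nat.mod_lt _ hpos) hi (by rw [← this, hwi])
    have hmod : (i + t) % ℓ = i % ℓ := by rw [heq, Nat.mod_eq_of_lt hi]
    have : i ≡ i + t [MOD ℓ] := by
      unfold Nat.ModEq
      rw [hmod, Nat.mod_eq_of_lt hi]
    exact (Nat.modEq_iff_dvd' (by omega)).mp this |>.elim (fun k hk => ⟨k, by omega⟩)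
  have hℓp : ℓ = p := by
    have h1 : p ∣ ℓ := hdiv w ℓ hc
    have h2 : ℓ ∣ p := by
      apply hgcd
      intro w'' ℓ'' hc''
      exact hclosed ℓ'' (w'' 0) ⟨w'', rfl, hc''.2.1, hc''.2.2.1⟩
    exact Nat.dvd_antisymm h2 h1
  rintro u u' ⟨wd, ℓ₀, hwd, hpd⟩
  obtain ⟨i, hi, hwi⟩ := hcover u
  have := hdet ℓ₀ u u' ⟨wd, hwd⟩ i hi hwi
  obtain ⟨c, hcc⟩ : ℓ ∣ ℓ₀ := hℓp ▸ hpd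
  rw [this, hcc, Nat.add_mul_mod_self_left, Nat.mod_eq_of_lt hi, hwi]

lemma cd_of_all_singleton (hsc : StronglyConnected (depEdge N))
    (hdiv : ∀ w ℓ, IsCycle (depEdge N) w ℓ → p ∣ ℓ) (hp : 0 < p)
    (hne : ∀ i, (N i).Nonempty) (v0 : Fin n)
    (hsing : ∀ u u', rbN hsc p u u' = 0 → u = u') : IsCycleDigraph (depEdge N) := by
  haveI : NeZero p := ⟨hp.ne'⟩
  choose φ hφs using exists_rb_eq hsc hdiv hp hne v0
  have huniq : ∀ u, φ (rbN hsc p u v0) = u := by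
    intro u
    apply hsing
    have h2 := rb_add hsc hdiv (φ (rbN hsc p u v0)) u v0
    have h3 := hφs (rbN hsc p u v0)
    linear_combination h2 + h3
  have hbij : Function.Bijective φ := by
    constructor
    · intro ρ ρ' h
      rw [← hφs ρ, ← hφs ρ', h]
    · intro u
      exact ⟨rbN hsc p u v0, huniq u⟩
  have hpn : p = n := by
    have := Fintype.card_congr (Equiv.ofBijective φ hbij)
    simpa [ZMod.card] using this
  have hout : ∀ u : Fin n, ∃ b, depEdge N u b := by
    intro u
    obtain ⟨c, hcpos, ⟨w', hw'⟩⟩ := closed_pos hsc hne u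
    refine ⟨w' 1, ?_⟩
    have := hw'.2.2 0 hcpos
    rwa [hw'.1] at this
  set w : ℕ → Fin n := fun s => φ (-((s : ℕ) : ZMod p)) with hwdef
  have hrbw : ∀ s : ℕ, rbN hsc p (w s) v0 = -((s : ℕ) : ZMod p) := fun s => hφs _
  have hedge : ∀ s : ℕ, depEdge N (w s) (w (s + 1)) := by
    intro s
    obtain ⟨b, hb⟩ := hout (w s)
    have h1 : rbN hsc p (w s) b = 1 := edge_rb hsc hdiv hb
    have h2 := rb_add hsc hdiv (w s) b v0
    rw [h1, hrbw s] at h2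
    have h3 : rbN hsc p b v0 = -(((s + 1 : ℕ) : ℕ) : ZMod p) := by
      push_cast
      linear_combination h2
    have h4 : φ (rbN hsc p b v0) = b := huniq b
    rw [h3] at h4
    rw [show w (s + 1) = φ (-(((s + 1 : ℕ) : ℕ) : ZMod p)) from rfl, h4]
    exact hb
  have hwinj : ∀ i j, i < p → j < p → w i = w j → i = j := by
    intro i j hi hj hij
    have := hbij.1 hij
    have h2 : ((i : ℕ) : ZMod p) = ((j : ℕ) : ZMod p) := by linear_combination -this
    have h3 : i = ((i : ℕ) : ZMod p).val := (ZMod.val_cast_of_lt hi).symm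
    have h4 : j = ((j : ℕ) : ZMod p).val := (ZMod.val_cast_of_lt hj).symm
    rw [h3, h4, h2]
  refine ⟨w, p, ⟨hp, ?_, fun i _ => hedge i, hwinj⟩, by simp [← hpn], ?_, ?_⟩
  · show φ (-((p : ℕ) : ZMod p)) = φ (-((0 : ℕ) : ZMod p))
    rw [ZMod.natCast_self]
    norm_num
  · intro v
    refine ⟨(-(rbN hsc p v v0)).val, ZMod.val_lt _, ?_⟩
    show φ (-(((-(rbN hsc p v v0)).val : ℕ) : ZMod p)) = v
    rw [ZMod.natCast_rightInverse, neg_neg, huniq]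
  · intro a b hab
    refine ⟨(-(rbN hsc p a v0)).val, ZMod.val_lt _, ?_, ?_⟩
    · show φ (-(((-(rbN hsc p a v0)).val : ℕ) : ZMod p)) = a
      rw [ZMod.natCast_rightInverse, neg_neg, huniq]
    · show φ (-((((-(rbN hsc p a v0)).val + 1 : ℕ) : ℕ) : ZMod p)) = b
      have h1 : rbN hsc p a b = 1 := edge_rb hsc hdiv hab
      have h2 := rb_add hsc hdiv a b v0
      rw [h1] at h2
      have h3 : rbN hsc p b v0 =
          -((((-(rbN hsc p a v0)).val + 1 : ℕ) : ℕ) : ZMod p) := by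
        push_cast
        rw [ZMod.natCast_rightInverse]
        linear_combination h2
      rw [← h3, huniq]

end Rose
end StabAux

open StabAux

/-- The stability structure: for periodic states `x, y` representing periodic orbits
`s_i, s_j`, the orbit `s_j` is a successor of `s_i` (some single-entry perturbation of
some state of `s_i` yields a trajectory entering `s_j`) iff one of:
(1) down-edge: `s_j` is obtained from (a rotation of) `s_i` by changing the value of
exactly one component from `1` to `0`;
(2) up-edge: `s_j` is obtained from (a rotation of) `s_i` by changing exactly one
component value from `0` to `1`, and the dependency graph is a rose;
(3) self-loop: `s_j = s_i`, `s_i` is not the all-ones necklace, and the dependency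
graph is not a cycle digraph. -/
theorem stability_structure {n : ℕ} (N : Fin n → Finset (Fin n))
    (hne : ∀ i, (N i).Nonempty) (hsc : StronglyConnected (depEdge N))
    (p : ℕ) (hp : 0 < p)
    (hdiv : ∀ w ℓ, IsCycle (depEdge N) w ℓ → p ∣ ℓ)
    (hgcd : ∀ q, (∀ w ℓ, IsCycle (depEdge N) w ℓ → q ∣ ℓ) → q ∣ p)
    (x y : Fin n → Bool)
    (hx : ∃ m, 0 < m ∧ (cbn N)^[m] x = x)
    (hy : ∃ m, 0 < m ∧ (cbn N)^[m] y = y) :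
    (∃ x₀ : Fin n → Bool, (∃ k, (cbn N)^[k] x = x₀) ∧
        ∃ (x' : Fin n → Bool) (i0 : Fin n),
          (x' i0 = !(x₀ i0) ∧ ∀ j, j ≠ i0 → x' j = x₀ j) ∧
          ∃ T m, (cbn N)^[T] x' = (cbn N)^[m] y) ↔
      ((∃ (k : ℕ) (i0 : Fin n),
          (∀ j, RelP (depEdge N) p j i0 → (cbn N)^[k] x j = true ∧ y j = false) ∧
          (∀ j, ¬ RelP (depEdge N) p j i0 → y j = (cbn N)^[k] x j)) ∨
       (IsRose (depEdge N) ∧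
         ∃ (k : ℕ) (i0 : Fin n),
           (∀ j, RelP (depEdge N) p j i0 → (cbn N)^[k] x j = false ∧ y j = true) ∧
           (∀ j, ¬ RelP (depEdge N) p j i0 → y j = (cbn N)^[k] x j)) ∨
       ((∃ k, (cbn N)^[k] x = y) ∧ (∃ j, x j = false) ∧
         ¬ IsCycleDigraph (depEdge N))) := by
  classical
  haveI : NeZero p := ⟨hp.ne'⟩
  obtain ⟨mx, hmx, hfx⟩ := hx
  obtain ⟨my, hmy, hfy⟩ := hy
  set M := mx * my with hM
  have hMpos : 0 < M := Nat.mul_pos hmx hmy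
  have hfxM : (cbn N)^[M] x = x := iter_fix_of_dvd hfx ⟨my, rfl⟩
  have hfyM : (cbn N)^[M] y = y := iter_fix_of_dvd hfy ⟨mx, Nat.mul_comm _ _⟩
  obtain ⟨M', hM'⟩ : ∃ M', M = M' + 1 := ⟨M - 1, by omega⟩
  obtain ⟨T, hT⟩ := satT hsc hdiv hgcd hp
  have hradd := rb_add hsc hdiv
  have hrs := rb_self hsc hdiv
  have hrsym := rb_symm hsc hdiv
  have hrel : ∀ a b : Fin n, RelP (depEdge N) p a b ↔ rbN hsc p a b = 0 :=
    fun a b => relP_iff hsc hdiv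
  have hsurj := exists_rb_eq hsc hdiv hp hne
  have hiterA : ∀ {t : ℕ}, T ≤ t → ∀ (z : Fin n → Bool) (i : Fin n),
      (cbn N)^[t] z i = (Aset hsc p i ((t : ℕ) : ZMod p)).inf z :=
    fun ht z i => iter_eq_Aset hsc hT ht z i
  have hconst : ∀ {z : Fin n → Bool}, (cbn N)^[M] z = z → ∀ {i i' : Fin n},
      rbN hsc p i i' = 0 → z i = z i' :=
    by intro z hz i i' h; exact periodic_rb_const hsc hdiv hp hT hMpos hz h
  have hcomm : ∀ (z : Fin n → Bool) (e : ℕ), (cbn N)^[M] z = z →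
      (cbn N)^[M] ((cbn N)^[e] z) = (cbn N)^[e] z := by
    intro z e hz
    rw [← Function.iterate_add_apply, Nat.add_comm, Function.iterate_add_apply, hz]
  -- a convenient exponent with all needed divisibilities
  set t' := M * (p * (T + 1)) with ht'def
  have hTle : T + 1 ≤ t' :=
    calc T + 1 ≤ p * (T + 1) := Nat.le_mul_of_pos_left _ hp
    _ ≤ t' := Nat.le_mul_of_pos_left _ hMpos
  have ht'T : T ≤ t' := by omega
  have hMt' : M ∣ t' := ⟨_, rfl⟩
  have hpt' : p ∣ t' := ⟨M * (T + 1), by ring⟩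
  have hcast' : ((t' : ℕ) : ZMod p) = 0 := (ZMod.natCast_eq_zero_iff _ _).mpr hpt'
  have hval : ∀ (z : Fin n → Bool), (cbn N)^[M] z = z → ∀ i,
      z i = (Aset hsc p i (0 : ZMod p)).inf z := by
    intro z hz i
    conv_lhs => rw [← iter_fix_of_dvd hz hMt']
    rw [hiterA ht'T z i, hcast']
  have hAsingle : ∀ {v : Fin n}, (∀ u, rbN hsc p u v = 0 → u = v) →
      Aset hsc p v (0 : ZMod p) = {v} := by
    intro v hv
    ext u
    rw [mem_Aset, Finset.mem_singleton]
    exact ⟨fun h => hv u h, fun h => h ▸ hrs u⟩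
  have halltrue : ∀ (z : Fin n → Bool), (∀ j, z j = true) → ∀ t j, (cbn N)^[t] z j = true := by
    intro z hz t
    induction t with
    | zero => exact hz
    | succ t ih =>
      intro j
      rw [Function.iterate_succ_apply']
      show (N j).inf ((cbn N)^[t] z) = true
      exact (Finset.inf_eq_top_iff _ _).mpr fun s _ => ih s
  constructor
  · rintro ⟨x₀, ⟨k, hk⟩, x', i0, ⟨hxi0, hxoff⟩, T₀, m', hT₀⟩
    have hx'up : x' = Function.update x₀ i0 (!(x₀ i0)) := by
      funext j
      by_cases hj : j = i0
      · subst hj; rw [Function.update_self]; exact hxi0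
      · rw [Function.update_of_ne hj]; exact hxoff j hj
    have hx₀M : (cbn N)^[M] x₀ = x₀ := by rw [← hk]; exact hcomm x k hfxM
    set t2 := M * (p * (T + T₀ + 1)) with ht2def
    have hT2le : T + T₀ + 1 ≤ t2 := calc
      T + T₀ + 1 ≤ p * (T + T₀ + 1) := Nat.le_mul_of_pos_left _ hp
      _ ≤ t2 := Nat.le_mul_of_pos_left _ hMpos
    have ht2T : T ≤ t2 := by omega
    have hMt2 : M ∣ t2 := ⟨_, rfl⟩
    have hpt2 : p ∣ t2 := ⟨M * (T + T₀ + 1), by ring⟩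
    have hcast2 : ((t2 : ℕ) : ZMod p) = 0 := (ZMod.natCast_eq_zero_iff _ _).mpr hpt2
    set m'' := t2 - T₀ + m' with hm''def
    have hz : (cbn N)^[t2] x' = (cbn N)^[m''] y := by
      have h1 : t2 = (t2 - T₀) + T₀ := by omega
      rw [h1, Function.iterate_add_apply, hT₀, ← Function.iterate_add_apply]
    set e := m'' * M' + M * (T + 1) with hedef
    have heM : M ∣ e + m'' := ⟨m'' + (T + 1), by rw [hedef, hM']; ring⟩
    have heT : T ≤ e := by
      have h1 : T + 1 ≤ M * (T + 1) := Nat.le_mul_of_pos_left _ hMpos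
      omega
    have hye : (cbn N)^[e] ((cbn N)^[m''] y) = y := by
      rw [← Function.iterate_add_apply]
      exact iter_fix_of_dvd hfyM heM
    obtain ⟨i0', hi0'⟩ := hsurj i0 (-((e : ℕ) : ZMod p))
    have hi0'2 : rbN hsc p i0 i0' = ((e : ℕ) : ZMod p) := by
      rw [hrsym i0' i0, hi0', neg_neg]
    have hAcls : ∀ i : Fin n, rbN hsc p i i0' = 0 →
        Aset hsc p i ((e : ℕ) : ZMod p) = Aset hsc p i0 (0 : ZMod p) := by
      intro i hri
      apply Aset_eq hsc hdiv
      have h1 := hradd i0 i0' i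
      have h2 := hrsym i i0'
      rw [hri] at h2
      linear_combination - h1 + h2 + hi0'2
    have hnotmem : ∀ i : Fin n, rbN hsc p i i0' ≠ 0 →
        ∀ j ∈ Aset hsc p i ((e : ℕ) : ZMod p), rbN hsc p j i0 ≠ 0 := by
      intro i hri j hj hj0
      apply hri
      have hji := mem_Aset.mp hj
      have h1 := hradd j i0 i
      have h2 := hradd i i0 i0'
      have h3 := hrsym i0 i
      linear_combination - h1 - h2 + h3 - hji + hi0'2 + hj0
    cases hcase : x₀ i0 with
    | true =>
      have hzval : ∀ i, ((cbn N)^[m''] y) i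
          = if rbN hsc p i0 i = 0 then false else x₀ i := by
        intro i
        rw [← hz, hiterA ht2T x' i, hcast2, hx'up, hcase, Bool.not_true, inf_update_false]
        by_cases hri : rbN hsc p i0 i = 0
        · rw [if_pos (mem_Aset.mpr hri), if_pos hri]
        · rw [if_neg (fun hmem => hri (mem_Aset.mp hmem)), if_neg hri]
          have h2 := hiterA ht2T x₀ i
          rw [hcast2, iter_fix_of_dvd hx₀M hMt2] at h2
          exact h2.symm
      refine Or.inl ⟨e + k, i0', ?_, ?_⟩
      · intro j hj
        have hj0 : rbN hsc p j i0' = 0 := (hrel j i0').mp hj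
        have hAj := hAcls j hj0
        constructor
        · rw [Function.iterate_add_apply, hk, hiterA heT x₀ j, hAj]
          refine (Finset.inf_eq_top_iff _ _).mpr fun s hs => ?_
          have hs0 : rbN hsc p s i0 = 0 := mem_Aset.mp hs
          show x₀ s = true
          rw [hconst hx₀M hs0, hcase]
        · rw [← hye, hiterA heT ((cbn N)^[m''] y) j, hAj]
          refine inf_eq_false_of (mem_Aset.mpr (hrs i0)) ?_
          rw [hzval i0, if_pos (hrs i0)]
      · intro j hj
        have hj0 : rbN hsc p j i0' ≠ 0 := fun h => hj ((hrel j i0').mpr h)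
        rw [show (cbn N)^[e + k] x = (cbn N)^[e] x₀ by rw [Function.iterate_add_apply, hk],
          ← hye, hiterA heT ((cbn N)^[m''] y) j, hiterA heT x₀ j]
        refine Finset.inf_congr rfl fun s hs => ?_
        rw [hzval s, if_neg ?_]
        intro h0
        exact hnotmem j hj0 s hs (by rw [hrsym i0 s, h0, neg_zero])
    | false =>
      have hzval : ∀ i, ((cbn N)^[m''] y) i
          = ((Aset hsc p i (0 : ZMod p)).erase i0).inf x₀ := by
        intro i
        rw [← hz, hiterA ht2T x' i, hcast2, hx'up, hcase, Bool.not_false, inf_update_true]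
      by_cases hbig : ∃ u1, u1 ≠ i0 ∧ rbN hsc p u1 i0 = 0
      · obtain ⟨u1, hu1ne, hu1⟩ := hbig
        have hzx₀ : (cbn N)^[m''] y = x₀ := by
          funext i
          rw [hzval i]
          by_cases hri : rbN hsc p i i0 = 0
          · have hAi : Aset hsc p i (0 : ZMod p) = Aset hsc p i0 (0 : ZMod p) := by
              apply Aset_eq hsc hdiv
              rw [hrsym i i0, hri, neg_zero]
            rw [hAi]
            have hmem : u1 ∈ (Aset hsc p i0 (0 : ZMod p)).erase i0 :=
              Finset.mem_erase.mpr ⟨hu1ne, mem_Aset.mpr hu1⟩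
            rw [inf_eq_false_of hmem (by rw [hconst hx₀M hu1, hcase]),
              hconst hx₀M hri, hcase]
          · have hnm : i0 ∉ Aset hsc p i (0 : ZMod p) :=
              fun hmem => hri (by rw [hrsym i0 i, mem_Aset.mp hmem, neg_zero])
            rw [Finset.erase_eq_of_notMem hnm, ← hval x₀ hx₀M i]
        refine Or.inr (Or.inr ⟨⟨e + k, ?_⟩, ?_, ?_⟩)
        · rw [Function.iterate_add_apply, hk, ← hzx₀, hye]
        · by_contra hallx
          push_neg at hallx
          have hat : ∀ j, x j = true := by
            intro j
            cases hxj : x j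
            · exact absurd hxj (hallx j)
            · rfl
          have h2 := halltrue x hat k i0
          rw [hk] at h2
          rw [h2] at hcase
          exact Bool.true_eq_false_eq_False hcase
        · intro hcd
          exact hu1ne (cd_singleton hdiv hgcd hcd u1 i0 ((hrel u1 i0).mpr hu1))
      · push_neg at hbig
        have hsing' : ∀ u, rbN hsc p u i0 = 0 → u = i0 := by
          intro u hu
          by_contra hne'
          exact hbig u hne' hu
        have hA00 : Aset hsc p i0 (0 : ZMod p) = {i0} := hAsingle hsing'
        have hzval2 : ∀ i, ((cbn N)^[m''] y) i = if i = i0 then true else x₀ i := by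
          intro i
          rw [hzval i]
          by_cases hii : i = i0
          · subst hii
            rw [if_pos rfl, hA00, Finset.erase_singleton]
            rfl
          · rw [if_neg hii]
            have hri : rbN hsc p i i0 ≠ 0 := fun h => hii (hsing' i h)
            have hnm : i0 ∉ Aset hsc p i (0 : ZMod p) :=
              fun hmem => hri (by rw [hrsym i0 i, mem_Aset.mp hmem, neg_zero])
            rw [Finset.erase_eq_of_notMem hnm, ← hval x₀ hx₀M i]
        refine Or.inr (Or.inl ⟨rose_of_singleton hsc hdiv hp hsing', e + k, i0', ?_, ?_⟩)
        · intro j hj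
          have hj0 : rbN hsc p j i0' = 0 := (hrel j i0').mp hj
          have hAj := hAcls j hj0
          constructor
          · rw [Function.iterate_add_apply, hk, hiterA heT x₀ j, hAj, hA00,
              Finset.inf_singleton, hcase]
          · rw [← hye, hiterA heT ((cbn N)^[m''] y) j, hAj, hA00, Finset.inf_singleton,
              hzval2 i0, if_pos rfl]
        · intro j hj
          have hj0 : rbN hsc p j i0' ≠ 0 := fun h => hj ((hrel j i0').mpr h)
          rw [show (cbn N)^[e + k] x = (cbn N)^[e] x₀ by rw [Function.iterate_add_apply, hk],
            ← hye, hiterA heT ((cbn N)^[m''] y) j, hiterA heT x₀ j]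
          refine Finset.inf_congr rfl fun s hs => ?_
          rw [hzval2 s, if_neg ?_]
          intro h0
          rw [h0] at hs
          exact hnotmem j hj0 i0 hs (hrs i0)

  · rintro (⟨k, i0, hon, hoff⟩ | ⟨hrose, k, i0, hon, hoff⟩ | ⟨⟨k₀, hk₀⟩, ⟨jf, hjf⟩, hncd⟩)
    · -- case 1: down-edge
      have hx₀M : (cbn N)^[M] ((cbn N)^[k] x) = (cbn N)^[k] x := hcomm x k hfxM
      have hon' : (cbn N)^[k] x i0 = true := (hon i0 ((hrel i0 i0).mpr (hrs i0))).1
      refine ⟨(cbn N)^[k] x, ⟨k, rfl⟩,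
        Function.update ((cbn N)^[k] x) i0 (!((cbn N)^[k] x i0)), i0,
        ⟨Function.update_self _ _ _, fun j hj => Function.update_of_ne hj _ _⟩, t', 0, ?_⟩
      have hupf : Function.update ((cbn N)^[k] x) i0 (!((cbn N)^[k] x i0))
          = Function.update ((cbn N)^[k] x) i0 false := by rw [hon', Bool.not_true]
      rw [hupf, Function.iterate_zero_apply]
      funext i
      rw [hiterA ht'T _ i, hcast', inf_update_false]
      by_cases hri : rbN hsc p i i0 = 0
      · rw [if_pos (mem_Aset.mpr (by rw [hrsym i i0, hri, neg_zero])),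
          (hon i ((hrel i i0).mpr hri)).2]
      · rw [if_neg (fun hmem => hri (by rw [hrsym i0 i, mem_Aset.mp hmem, neg_zero])),
          ← hval _ hx₀M i, hoff i (fun hR => hri ((hrel i i0).mp hR))]
    · -- case 2: up-edge, rose
      obtain ⟨v, hsing'⟩ := singleton_of_rose hsc hdiv hgcd hp hne hrose
      have hx₀M : (cbn N)^[M] ((cbn N)^[k] x) = (cbn N)^[k] x := hcomm x k hfxM
      set e := (rbN hsc p i0 v).val + p * (T + 1) with hedef
      have heT : T ≤ e := by
        have h1 : T + 1 ≤ p * (T + 1) := Nat.le_mul_of_pos_left _ hp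
        omega
      have hecast : ((e : ℕ) : ZMod p) = rbN hsc p i0 v := by
        rw [hedef]
        push_cast
        rw [ZMod.natCast_rightInverse (rbN hsc p i0 v), ZMod.natCast_self]
        ring
      set x₁ := (cbn N)^[e] ((cbn N)^[k] x) with hx₁def
      have hx₁M : (cbn N)^[M] x₁ = x₁ := hcomm _ e hx₀M
      have hAv : Aset hsc p v ((e : ℕ) : ZMod p) = Aset hsc p i0 (0 : ZMod p) := by
        rw [hecast]; exact Aset_eq hsc hdiv rfl
      have hx₁v : x₁ v = false := by
        rw [hx₁def, hiterA heT _ v, hAv]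
        exact inf_eq_false_of (mem_Aset.mpr (hrs i0)) (hon i0 ((hrel i0 i0).mpr (hrs i0))).1
      have hy₁v : (cbn N)^[e] y v = true := by
        rw [hiterA heT y v, hAv]
        refine (Finset.inf_eq_top_iff _ _).mpr fun s hs => ?_
        exact (hon s ((hrel s i0).mpr (mem_Aset.mp hs))).2
      have hAv0 : Aset hsc p v (0 : ZMod p) = {v} := hAsingle hsing'
      refine ⟨x₁, ⟨e + k, by rw [Function.iterate_add_apply, ← hx₁def]⟩,
        Function.update x₁ v (!(x₁ v)), v,
        ⟨Function.update_self _ _ _, fun j hj => Function.update_of_ne hj _ _⟩, t', e, ?_⟩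
      have hupf : Function.update x₁ v (!(x₁ v)) = Function.update x₁ v true := by
        rw [hx₁v, Bool.not_false]
      rw [hupf]
      funext i
      rw [hiterA ht'T _ i, hcast', inf_update_true]
      by_cases hri : rbN hsc p i v = 0
      · have hiv : i = v := hsing' i hri
        subst hiv
        rw [hAv0, Finset.erase_singleton, hy₁v]
        rfl
      · have hnm : v ∉ Aset hsc p i (0 : ZMod p) :=
          fun hmem => hri (by rw [hrsym v i, mem_Aset.mp hmem, neg_zero])
        rw [Finset.erase_eq_of_notMem hnm, ← hval x₁ hx₁M i, hx₁def,
          hiterA heT ((cbn N)^[k] x) i, hiterA heT y i]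
        refine Finset.inf_congr rfl fun s hs => ?_
        have hs3 : rbN hsc p s i = rbN hsc p i0 v := (mem_Aset.mp hs).trans hecast
        have hsi0 : rbN hsc p s i0 ≠ 0 := by
          intro h0
          apply hri
          have h1 := hradd s i0 v
          have h2 := hradd s i v
          linear_combination h2 - h1 - hs3 + h0
        exact (hoff s (fun hR => hsi0 ((hrel s i0).mp hR))).symm
    · -- case 3: self-loop
      have hbig : ∃ u u1 : Fin n, u1 ≠ u ∧ rbN hsc p u1 u = 0 := by
        by_contra hall
        push_neg at hall
        refine hncd (cd_of_all_singleton hsc hdiv hp hne jf ?_)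
        intro a b hab
        by_contra hne'
        exact hall b a hne' hab
      obtain ⟨u, u1, hu1ne, hu1⟩ := hbig
      set s := (rbN hsc p jf u).val + p * (T + 1) with hsdef
      have hsT : T ≤ s := by
        have h1 : T + 1 ≤ p * (T + 1) := Nat.le_mul_of_pos_left _ hp
        omega
      have hscast : ((s : ℕ) : ZMod p) = rbN hsc p jf u := by
        rw [hsdef]
        push_cast
        rw [ZMod.natCast_rightInverse (rbN hsc p jf u), ZMod.natCast_self]
        ring
      have hx₀M : (cbn N)^[M] ((cbn N)^[s] x) = (cbn N)^[s] x := hcomm x s hfxM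
      have hx₀class : ∀ i : Fin n, rbN hsc p i u = 0 → (cbn N)^[s] x i = false := by
        intro i hri
        rw [hiterA hsT x i]
        refine inf_eq_false_of (mem_Aset.mpr ?_) hjf
        rw [hscast]
        have h1 := hradd jf u i
        have h2 := hrsym i u
        rw [hri] at h2
        linear_combination - h1 + h2
      have hxc : (cbn N)^[k₀ * M'] y = x := by
        rw [← hk₀, ← Function.iterate_add_apply]
        exact iter_fix_of_dvd hfxM ⟨k₀, by rw [hM']; ring⟩
      refine ⟨(cbn N)^[s] x, ⟨s, rfl⟩,
        Function.update ((cbn N)^[s] x) u (!((cbn N)^[s] x u)), u,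
        ⟨Function.update_self _ _ _, fun j hj => Function.update_of_ne hj _ _⟩,
        t', s + k₀ * M', ?_⟩
      have hupf : Function.update ((cbn N)^[s] x) u (!((cbn N)^[s] x u))
          = Function.update ((cbn N)^[s] x) u true := by
        rw [hx₀class u (hrs u), Bool.not_false]
      have hrhs : (cbn N)^[s + k₀ * M'] y = (cbn N)^[s] x := by
        rw [Function.iterate_add_apply, hxc]
      rw [hrhs, hupf]
      funext i
      rw [hiterA ht'T _ i, hcast', inf_update_true]
      by_cases hri : rbN hsc p i u = 0
      · have hAi : Aset hsc p i (0 : ZMod p) = Aset hsc p u (0 : ZMod p) :=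
          Aset_eq hsc hdiv (by rw [hrsym i u, hri, neg_zero])
        rw [hAi]
        have hmem : u1 ∈ (Aset hsc p u (0 : ZMod p)).erase u :=
          Finset.mem_erase.mpr ⟨hu1ne, mem_Aset.mpr hu1⟩
        rw [inf_eq_false_of hmem (hx₀class u1 hu1), hx₀class i hri]
      · have hnm : u ∉ Aset hsc p i (0 : ZMod p) :=
          fun hmem => hri (by rw [hrsym u i, mem_Aset.mp hmem, neg_zero])
        rw [Finset.erase_eq_of_notMem hnm, ← hval _ hx₀M i]
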